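/- Let φ ∈ 𝒮(ℝ^n), and p, q ∈ (0,∞] with p ≤ q. Then the space 𝒪^p(φ) := { u ∈ 𝒮'(ℝ^n) : u = u*φ and u ∈ L^p } embeds continuously into 𝒪^q(φ): there is C > 0 such that ‖u‖_{L^q} ≤ C ‖u‖_{L^p} for all u ∈ 𝒪^p(φ). -/

import Mathlib

open MeasureTheory ENNReal Filter

private lemma nik_step {n : ℕ} (φ : SchwartzMap (EuclideanSpace ℝ (Fin n)) ℂ)
    (u : EuclideanSpace ℝ (Fin n) → ℂ)
    (hrep : ∀ x, u x = ∫ y, u y * φ (x - y))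
    {pr : ℝ} (hpr0 : 0 < pr) (hpr1 : pr ≤ 1)
    (hint : Integrable (fun y => ‖u y‖ ^ pr) volume)
    {A r : ℝ} {m : ℕ} (hA : 0 ≤ A) (hr : 0 ≤ r) (hrm : r ≤ (m : ℝ))
    (hu : ∀ x, ‖u x‖ ≤ A * (1 + ‖x‖) ^ r)
    {S : ℝ} (hS : ∀ z, (1 + ‖z‖) ^ m * ‖φ z‖ ≤ S) (x : EuclideanSpace ℝ (Fin n)) :
    ‖u x‖ ≤ A ^ (1 - pr) * (S * ∫ y, ‖u y‖ ^ pr) * (1 + ‖x‖) ^ (r * (1 - pr)) := by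
  have h1p : 0 ≤ 1 - pr := by linarith
  have key : ∀ y, ‖u y * φ (x - y)‖ ≤
      (A ^ (1 - pr) * S * (1 + ‖x‖) ^ (r * (1 - pr))) * ‖u y‖ ^ pr := by
    intro y
    have hb : (0:ℝ) < 1 + ‖y‖ := by positivity
    have hbx : (0:ℝ) < 1 + ‖x‖ := by positivity
    have hbxy : (0:ℝ) < 1 + ‖x - y‖ := by positivity
    have h2 : ‖u y‖ ^ (1 - pr) ≤ A ^ (1 - pr) * (1 + ‖y‖) ^ (r * (1 - pr)) := by
      calc ‖u y‖ ^ (1 - pr) ≤ (A * (1 + ‖y‖) ^ r) ^ (1 - pr) :=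
            Real.rpow_le_rpow (norm_nonneg _) (hu y) h1p
        _ = A ^ (1 - pr) * (1 + ‖y‖) ^ (r * (1 - pr)) := by
            rw [Real.mul_rpow hA (Real.rpow_nonneg hb.le _), ← Real.rpow_mul hb.le]
    have h3 : (1 + ‖y‖) ^ (r * (1 - pr)) ≤
        (1 + ‖x‖) ^ (r * (1 - pr)) * (1 + ‖x - y‖) ^ m := by
      have hyy : 1 + ‖y‖ ≤ (1 + ‖x‖) * (1 + ‖x - y‖) := by
        have hn : ‖y‖ ≤ ‖x‖ + ‖x - y‖ := by
          simpa using norm_sub_le x (x - y)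
        nlinarith [norm_nonneg x, norm_nonneg (x - y)]
      have hrr : r * (1 - pr) ≤ (m : ℝ) := le_trans (by nlinarith) hrm
      calc (1 + ‖y‖) ^ (r * (1 - pr)) ≤ ((1 + ‖x‖) * (1 + ‖x - y‖)) ^ (r * (1 - pr)) :=
            Real.rpow_le_rpow hb.le hyy (by positivity)
        _ = (1 + ‖x‖) ^ (r * (1 - pr)) * (1 + ‖x - y‖) ^ (r * (1 - pr)) :=
            Real.mul_rpow hbx.le hbxy.le
        _ ≤ (1 + ‖x‖) ^ (r * (1 - pr)) * (1 + ‖x - y‖) ^ m := by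
            apply mul_le_mul_of_nonneg_left _ (Real.rpow_nonneg hbx.le _)
            rw [← Real.rpow_natCast (1 + ‖x - y‖) m]
            exact Real.rpow_le_rpow_of_exponent_le (le_add_of_nonneg_right (norm_nonneg _)) hrr
    have hsplit : ‖u y‖ = ‖u y‖ ^ pr * ‖u y‖ ^ (1 - pr) := by
      have h := Real.rpow_add' (norm_nonneg (u y)) (show pr + (1 - pr) ≠ 0 by norm_num)
      rw [show pr + (1 - pr) = 1 by ring, Real.rpow_one] at h
      exact h
    calc ‖u y * φ (x - y)‖ = ‖u y‖ * ‖φ (x - y)‖ := norm_mul _ _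
      _ ≤ (‖u y‖ ^ pr * (A ^ (1 - pr) * ((1 + ‖x‖) ^ (r * (1 - pr)) * (1 + ‖x - y‖) ^ m))) *
            ‖φ (x - y)‖ := by
          apply mul_le_mul_of_nonneg_right _ (norm_nonneg _)
          calc ‖u y‖ = ‖u y‖ ^ pr * ‖u y‖ ^ (1 - pr) := hsplit
            _ ≤ ‖u y‖ ^ pr * (A ^ (1 - pr) * ((1 + ‖x‖) ^ (r * (1 - pr)) * (1 + ‖x - y‖) ^ m)) := by
                refine mul_le_mul_of_nonneg_left ?_ (Real.rpow_nonneg (norm_nonneg _) _)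
                exact le_trans h2 (mul_le_mul_of_nonneg_left h3 (Real.rpow_nonneg hA _))
      _ = (‖u y‖ ^ pr * A ^ (1 - pr) * (1 + ‖x‖) ^ (r * (1 - pr))) *
            ((1 + ‖x - y‖) ^ m * ‖φ (x - y)‖) := by ring
      _ ≤ (‖u y‖ ^ pr * A ^ (1 - pr) * (1 + ‖x‖) ^ (r * (1 - pr))) * S := by
          apply mul_le_mul_of_nonneg_left (hS _) (by positivity)
      _ = (A ^ (1 - pr) * S * (1 + ‖x‖) ^ (r * (1 - pr))) * ‖u y‖ ^ pr := by ring
  rw [hrep x]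
  calc ‖∫ y, u y * φ (x - y)‖ ≤ ∫ y, ‖u y * φ (x - y)‖ := norm_integral_le_integral_norm _
    _ ≤ ∫ y, (A ^ (1 - pr) * S * (1 + ‖x‖) ^ (r * (1 - pr))) * ‖u y‖ ^ pr :=
        integral_mono_of_nonneg (Filter.Eventually.of_forall fun y => norm_nonneg _)
          (hint.const_mul _) (Filter.Eventually.of_forall key)
    _ = A ^ (1 - pr) * (S * ∫ y, ‖u y‖ ^ pr) * (1 + ‖x‖) ^ (r * (1 - pr)) := by
        rw [integral_const_mul]; ring
private lemma nik_small {n : ℕ} (φ : SchwartzMap (EuclideanSpace ℝ (Fin n)) ℂ)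
    (u : EuclideanSpace ℝ (Fin n) → ℂ)
    (hgrow : ∃ (A : ℝ) (k : ℕ), ∀ x, ‖u x‖ ≤ A * (1 + ‖x‖) ^ k)
    (hrep : ∀ x, u x = ∫ y, u y * φ (x - y))
    {pr : ℝ} (hpr0 : 0 < pr) (hpr1 : pr ≤ 1)
    (hint : Integrable (fun y => ‖u y‖ ^ pr) volume)
    (hNpos : 0 < ∫ y, ‖u y‖ ^ pr)
    {S : ℝ} (hS1 : 1 ≤ S) (hS : ∀ z, (1 + ‖z‖) * ‖φ z‖ ≤ S) (x : EuclideanSpace ℝ (Fin n)) :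
    ‖u x‖ ≤ (S * ∫ y, ‖u y‖ ^ pr) ^ (1 / pr) := by
  have h1p : 0 ≤ 1 - pr := by linarith
  have h1p1 : 1 - pr < 1 := by linarith
  have hSk : ∀ k : ℕ, ∃ Sk : ℝ, ∀ z, (1 + ‖z‖) ^ k * ‖φ z‖ ≤ Sk := by
    intro k
    refine ⟨2 ^ k * (Finset.Iic (k, 0)).sup (fun m => SchwartzMap.seminorm ℝ m.1 m.2) φ,
      fun z => ?_⟩
    simpa [norm_iteratedFDeriv_zero] using
      SchwartzMap.one_add_le_sup_seminorm_apply (𝕜 := ℝ) (m := (k, 0)) le_rfl le_rfl φ z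
  obtain ⟨A, k, hA⟩ := hgrow
  have phase1 : ∀ j : ℕ, ∃ A' : ℝ, 0 ≤ A' ∧
      ∀ x, ‖u x‖ ≤ A' * (1 + ‖x‖) ^ ((k : ℝ) * (1 - pr) ^ j) := by
    intro j
    induction j with
    | zero =>
        refine ⟨max A 0, le_max_right _ _, fun x => ?_⟩
        have hx : (0:ℝ) < 1 + ‖x‖ := by positivity
        rw [pow_zero, mul_one, Real.rpow_natCast]
        exact le_trans (hA x) (mul_le_mul_of_nonneg_right (le_max_left _ _) (by positivity))
    | succ j ih =>
        obtain ⟨A', hA'0, hA'⟩ := ih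
        obtain ⟨Sk, hSk'⟩ := hSk k
        have hrm : (k : ℝ) * (1 - pr) ^ j ≤ (k : ℝ) := by
          have h01 : (1 - pr) ^ j ≤ 1 := pow_le_one₀ h1p (by linarith)
          nlinarith [Nat.cast_nonneg (α := ℝ) k]
        have hSk0 : 0 ≤ Sk := le_trans (by positivity) (hSk' 0)
        refine ⟨A' ^ (1 - pr) * (Sk * ∫ y, ‖u y‖ ^ pr),
          mul_nonneg (Real.rpow_nonneg hA'0 _) (mul_nonneg hSk0 hNpos.le), fun x => ?_⟩
        have hstep := nik_step φ u hrep hpr0 hpr1 hint hA'0 (by positivity) hrm hA' hSk' x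
        have hexp : ((k : ℝ) * (1 - pr) ^ j) * (1 - pr) = (k : ℝ) * (1 - pr) ^ (j + 1) := by
          rw [pow_succ]; ring
        rw [← hexp]
        exact hstep
  have he : Tendsto (fun j : ℕ => (1 - pr) ^ j) atTop (nhds 0) :=
    tendsto_pow_atTop_nhds_zero_of_lt_one h1p h1p1
  have htend : Tendsto (fun j : ℕ => (k : ℝ) * (1 - pr) ^ j) atTop (nhds 0) := by
    simpa using he.const_mul (k : ℝ)
  obtain ⟨j0, hj0⟩ := (htend.eventually_le_const one_pos).exists
  obtain ⟨A', hA'0, hbase⟩ := phase1 j0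
  set r0 : ℝ := (k : ℝ) * (1 - pr) ^ j0 with hr0def
  have hr00 : 0 ≤ r0 := by positivity
  have hSN : 0 < S * ∫ y, ‖u y‖ ^ pr := by positivity
  set L : ℝ := (S * ∫ y, ‖u y‖ ^ pr) ^ (1 / pr) with hLdef
  have hLpos : 0 < L := Real.rpow_pos_of_pos hSN _
  set M : ℝ := max (A' / L) 1 with hMdef
  have hM1 : (1:ℝ) ≤ M := le_max_right _ _
  have hM0 : (0:ℝ) < M := lt_of_lt_of_le one_pos hM1
  have hS' : ∀ z, (1 + ‖z‖) ^ (1 : ℕ) * ‖φ z‖ ≤ S := by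
    intro z; rw [pow_one]; exact hS z
  have phase2 : ∀ i : ℕ, ∀ x, ‖u x‖ ≤
      M ^ ((1 - pr) ^ i) * L * (1 + ‖x‖) ^ (r0 * (1 - pr) ^ i) := by
    intro i
    induction i with
    | zero =>
        intro x
        rw [pow_zero, Real.rpow_one, mul_one]
        have hML : A' ≤ M * L := by
          have h := mul_le_mul_of_nonneg_right (le_max_left (A' / L) 1) hLpos.le
          rwa [div_mul_cancel₀ _ hLpos.ne'] at h
        exact le_trans (hbase x)
          (mul_le_mul_of_nonneg_right hML (Real.rpow_nonneg (by positivity) _))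
    | succ i ih =>
        intro x
        have hrm1 : r0 * (1 - pr) ^ i ≤ ((1 : ℕ) : ℝ) := by
          have h01 : (1 - pr) ^ i ≤ 1 := pow_le_one₀ h1p (by linarith)
          have : r0 * (1 - pr) ^ i ≤ r0 * 1 := by nlinarith
          simpa using le_trans this (by simpa using hj0)
        have hstep := nik_step φ u hrep hpr0 hpr1 hint
          (A := M ^ ((1 - pr) ^ i) * L) (r := r0 * (1 - pr) ^ i) (m := 1)
          (by positivity) (by positivity) hrm1 ih hS' x
        have e1 : (M ^ ((1 - pr) ^ i)) ^ (1 - pr) = M ^ ((1 - pr) ^ (i + 1)) := by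
          rw [← Real.rpow_mul hM0.le, ← pow_succ]
        have e2 : L ^ (1 - pr) * (S * ∫ y, ‖u y‖ ^ pr) = L := by
          rw [hLdef, ← Real.rpow_mul hSN.le]
          nth_rewrite 2 [← Real.rpow_one (S * ∫ y, ‖u y‖ ^ pr)]
          rw [← Real.rpow_add hSN]
          congr 1
          field_simp
          ring
        have hcoef : (M ^ ((1 - pr) ^ i) * L) ^ (1 - pr) * (S * ∫ y, ‖u y‖ ^ pr) =
            M ^ ((1 - pr) ^ (i + 1)) * L := by
          rw [Real.mul_rpow (Real.rpow_nonneg hM0.le _) hLpos.le, e1, mul_assoc, e2]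
        have hexp : (r0 * (1 - pr) ^ i) * (1 - pr) = r0 * (1 - pr) ^ (i + 1) := by
          rw [pow_succ]; ring
        rw [← hcoef, ← hexp]
        exact hstep
  have t1 : Tendsto (fun i : ℕ => M ^ ((1 - pr) ^ i)) atTop (nhds 1) := by
    have h := (Real.continuousAt_const_rpow (a := M) hM0.ne').tendsto.comp he
    simpa [Function.comp_def, Real.rpow_zero] using h
  have hbx : (0:ℝ) < 1 + ‖x‖ := by positivity
  have t2 : Tendsto (fun i : ℕ => (1 + ‖x‖) ^ (r0 * (1 - pr) ^ i)) atTop (nhds 1) := by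
    have h' : Tendsto (fun i : ℕ => r0 * (1 - pr) ^ i) atTop (nhds 0) := by
      simpa using he.const_mul r0
    have h := (Real.continuousAt_const_rpow (a := 1 + ‖x‖) hbx.ne').tendsto.comp h'
    simpa [Function.comp_def, Real.rpow_zero] using h
  have tfin : Tendsto (fun i : ℕ => M ^ ((1 - pr) ^ i) * L * (1 + ‖x‖) ^ (r0 * (1 - pr) ^ i))
      atTop (nhds L) := by
    have h := (t1.mul (tendsto_const_nhds (x := L))).mul t2
    simpa using h
  exact ge_of_tendsto' tfin (fun i => phase2 i x)
private lemma nik_big {n : ℕ} (φ : SchwartzMap (EuclideanSpace ℝ (Fin n)) ℂ)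
    (u : EuclideanSpace ℝ (Fin n) → ℂ)
    (hrep : ∀ x, u x = ∫ y, u y * φ (x - y))
    {pr : ℝ} (hpr1 : 1 ≤ pr)
    (hint : Integrable (fun y => ‖u y‖ ^ pr) volume)
    (hN : ∫ y, ‖u y‖ ^ pr = 1)
    {Sφ : ℝ} (hSφ : ∀ z, ‖φ z‖ ≤ Sφ) (x : EuclideanSpace ℝ (Fin n)) :
    ‖u x‖ ≤ (∫ z, ‖φ z‖) + Sφ := by
  have hφint : Integrable (fun y => ‖φ (x - y)‖) volume :=
    (φ.integrable.norm).comp_sub_left x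
  have key : ∀ y, ‖u y * φ (x - y)‖ ≤ ‖φ (x - y)‖ + ‖u y‖ ^ pr * Sφ := by
    intro y
    have h1 : ‖u y‖ ≤ 1 + ‖u y‖ ^ pr := by
      rcases le_or_gt ‖u y‖ 1 with h | h
      · exact le_trans h (le_add_of_nonneg_right (Real.rpow_nonneg (norm_nonneg _) _))
      · calc ‖u y‖ = ‖u y‖ ^ (1:ℝ) := (Real.rpow_one _).symm
          _ ≤ ‖u y‖ ^ pr := Real.rpow_le_rpow_of_exponent_le h.le hpr1
          _ ≤ 1 + ‖u y‖ ^ pr := le_add_of_nonneg_left one_pos.le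
    calc ‖u y * φ (x - y)‖ = ‖u y‖ * ‖φ (x - y)‖ := norm_mul _ _
      _ ≤ (1 + ‖u y‖ ^ pr) * ‖φ (x - y)‖ := mul_le_mul_of_nonneg_right h1 (norm_nonneg _)
      _ = ‖φ (x - y)‖ + ‖u y‖ ^ pr * ‖φ (x - y)‖ := by ring
      _ ≤ ‖φ (x - y)‖ + ‖u y‖ ^ pr * Sφ := by
          exact add_le_add_right
            (mul_le_mul_of_nonneg_left (hSφ _) (Real.rpow_nonneg (norm_nonneg _) _)) _
  rw [hrep x]
  calc ‖∫ y, u y * φ (x - y)‖ ≤ ∫ y, ‖u y * φ (x - y)‖ := norm_integral_le_integral_norm _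
    _ ≤ ∫ y, (‖φ (x - y)‖ + ‖u y‖ ^ pr * Sφ) :=
        integral_mono_of_nonneg (Filter.Eventually.of_forall fun y => norm_nonneg _)
          (hφint.add (hint.mul_const _)) (Filter.Eventually.of_forall key)
    _ = (∫ z, ‖φ z‖) + Sφ := by
        rw [integral_add hφint (hint.mul_const _),
          integral_sub_left_eq_self (fun z => ‖φ z‖) volume x, integral_mul_const, hN, one_mul]

private lemma nik_norm_int {n : ℕ} {u : EuclideanSpace ℝ (Fin n) → ℂ} {p : ℝ≥0∞}
    (hmem : MemLp u p volume) (hp0 : p ≠ 0) (hptop : p ≠ ∞) :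
    ∫ y, ‖u y‖ ^ p.toReal = (eLpNorm u p volume).toReal ^ p.toReal := by
  have hpr0 : 0 < p.toReal := ENNReal.toReal_pos hp0 hptop
  have hint := hmem.integrable_norm_rpow hp0 hptop
  rw [eLpNorm_eq_lintegral_rpow_enorm_toReal hp0 hptop]
  rw [integral_eq_lintegral_of_nonneg_ae
    (Filter.Eventually.of_forall fun y => Real.rpow_nonneg (norm_nonneg _) _)
    hint.aestronglyMeasurable]
  have h1 : ∀ y, ENNReal.ofReal (‖u y‖ ^ p.toReal) = (‖u y‖₊ : ℝ≥0∞) ^ p.toReal := by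
    intro y
    rw [← enorm_eq_nnnorm, ← ofReal_norm, ← ENNReal.ofReal_rpow_of_nonneg (norm_nonneg _) hpr0.le]
  simp_rw [h1]
  rw [ENNReal.toReal_rpow, ← ENNReal.rpow_mul, one_div, inv_mul_cancel₀ hpr0.ne',
    ENNReal.rpow_one]
  rfl

private lemma nik_assemble {n : ℕ} {u : EuclideanSpace ℝ (Fin n) → ℂ} {p q : ℝ≥0∞}
    (hmeas : AEStronglyMeasurable u volume)
    (hp0 : p ≠ 0) (hptop : p ≠ ∞) (hpq : p ≤ q)
    (hN0 : eLpNorm u p volume ≠ 0) (hNtop : eLpNorm u p volume ≠ ∞)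
    {C₀ : ℝ} (hC₀ : 1 ≤ C₀)
    (hbd : ∀ x, ‖u x‖ ≤ C₀ * (eLpNorm u p volume).toReal) :
    eLpNorm u q volume ≤ ENNReal.ofReal C₀ * eLpNorm u p volume := by
  have hq0 : q ≠ 0 := fun h => hp0 (le_antisymm (h ▸ hpq) zero_le)
  have hC₀0 : (0:ℝ) ≤ C₀ := le_trans zero_le_one hC₀
  have hB : ENNReal.ofReal (C₀ * (eLpNorm u p volume).toReal)
      = ENNReal.ofReal C₀ * eLpNorm u p volume := by
    rw [ENNReal.ofReal_mul hC₀0, ENNReal.ofReal_toReal hNtop]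
  rcases eq_or_ne q ∞ with hqtop | hqtop
  · rw [hqtop, eLpNorm_exponent_top]
    calc eLpNormEssSup u volume ≤ ENNReal.ofReal (C₀ * (eLpNorm u p volume).toReal) :=
        eLpNormEssSup_le_of_ae_bound (Filter.Eventually.of_forall hbd)
      _ = ENNReal.ofReal C₀ * eLpNorm u p volume := hB
  · have hpr0 : 0 < p.toReal := ENNReal.toReal_pos hp0 hptop
    have hqr0 : 0 < q.toReal := ENNReal.toReal_pos hq0 hqtop
    have hprqr : p.toReal ≤ q.toReal := ENNReal.toReal_mono hqtop hpq
    set Np := eLpNorm u p volume with hNp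
    set B := ENNReal.ofReal C₀ * Np with hBdef
    have hBne : B ≠ ∞ := ENNReal.mul_ne_top ENNReal.ofReal_ne_top hNtop
    have hbdE : ∀ x, (‖u x‖₊ : ℝ≥0∞) ≤ B := by
      intro x
      rw [← enorm_eq_nnnorm, ← ofReal_norm, ← hB]
      exact ENNReal.ofReal_le_ofReal (hbd x)
    have hIp : ∫⁻ y, (‖u y‖₊ : ℝ≥0∞) ^ p.toReal ∂volume = Np ^ p.toReal := by
      rw [hNp, eLpNorm_eq_lintegral_rpow_enorm_toReal hp0 hptop, ← ENNReal.rpow_mul, one_div,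
        inv_mul_cancel₀ hpr0.ne', ENNReal.rpow_one]
      rfl
    rw [eLpNorm_eq_lintegral_rpow_enorm_toReal hq0 hqtop]
    have hmono : ∫⁻ y, (‖u y‖₊ : ℝ≥0∞) ^ q.toReal ∂volume ≤
        B ^ (q.toReal - p.toReal) * Np ^ p.toReal := by
      rw [← hIp, ← lintegral_const_mul' _ _ (ENNReal.rpow_ne_top_of_nonneg (by linarith) hBne)]
      refine lintegral_mono fun y => ?_
      have hsplit : (‖u y‖₊ : ℝ≥0∞) ^ q.toReal
          = (‖u y‖₊ : ℝ≥0∞) ^ (q.toReal - p.toReal) * (‖u y‖₊ : ℝ≥0∞) ^ p.toReal := by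
        rw [← ENNReal.rpow_add_of_nonneg _ _ (by linarith) hpr0.le, sub_add_cancel]
      rw [hsplit]
      exact mul_le_mul_left (ENNReal.rpow_le_rpow (hbdE y) (by linarith)) _
    calc (∫⁻ y, (‖u y‖₊ : ℝ≥0∞) ^ q.toReal ∂volume) ^ (1 / q.toReal)
        ≤ (B ^ (q.toReal - p.toReal) * Np ^ p.toReal) ^ (1 / q.toReal) :=
          ENNReal.rpow_le_rpow hmono (one_div_nonneg.mpr hqr0.le)
      _ = B ^ ((q.toReal - p.toReal) * (1 / q.toReal)) * Np ^ (p.toReal * (1 / q.toReal)) := by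
          rw [ENNReal.mul_rpow_of_nonneg _ _ (one_div_nonneg.mpr hqr0.le), ← ENNReal.rpow_mul,
            ← ENNReal.rpow_mul]
      _ = B ^ ((q.toReal - p.toReal) / q.toReal) * Np ^ (p.toReal / q.toReal) := by
          rw [mul_one_div, mul_one_div]
      _ = ENNReal.ofReal C₀ ^ ((q.toReal - p.toReal) / q.toReal) *
            (Np ^ ((q.toReal - p.toReal) / q.toReal) * Np ^ (p.toReal / q.toReal)) := by
          rw [hBdef, ENNReal.mul_rpow_of_nonneg _ _ (div_nonneg (by linarith) hqr0.le), mul_assoc]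
      _ = ENNReal.ofReal C₀ ^ ((q.toReal - p.toReal) / q.toReal) * Np := by
          rw [← ENNReal.rpow_add _ _ hN0 hNtop,
            show (q.toReal - p.toReal) / q.toReal + p.toReal / q.toReal = 1 by field_simp; ring,
            ENNReal.rpow_one]
      _ ≤ ENNReal.ofReal C₀ * Np := by
          refine mul_le_mul_left ?_ _
          have h1 : (1:ℝ≥0∞) ≤ ENNReal.ofReal C₀ := ENNReal.one_le_ofReal.mpr hC₀
          calc ENNReal.ofReal C₀ ^ ((q.toReal - p.toReal) / q.toReal)
              ≤ ENNReal.ofReal C₀ ^ (1:ℝ) :=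
                ENNReal.rpow_le_rpow_of_exponent_le h1
                  (by rw [div_le_one hqr0]; linarith)
            _ = ENNReal.ofReal C₀ := ENNReal.rpow_one _

/-- Nikolskii-type embedding.  Let `φ` be a Schwartz function and `0 < p ≤ q ≤ ∞`.
There is `C > 0` such that every tempered distribution `u` with `u = u * φ`
(identified with a continuous function of polynomial growth satisfying the reproducing
identity) belonging to `L^p` satisfies `‖u‖_{L^q} ≤ C ‖u‖_{L^p}`;
that is, `𝒪^p(φ)` embeds continuously into `𝒪^q(φ)`. -/
theorem stmt_8 {n : ℕ} (φ : SchwartzMap (EuclideanSpace ℝ (Fin n)) ℂ) (p q : ℝ≥0∞)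
    (hp : 0 < p) (hpq : p ≤ q) :
    ∃ C : ℝ≥0∞, 0 < C ∧ C < ∞ ∧
      ∀ u : EuclideanSpace ℝ (Fin n) → ℂ, Continuous u →
        (∃ (A : ℝ) (k : ℕ), ∀ x, ‖u x‖ ≤ A * (1 + ‖x‖) ^ k) →
        (∀ x, u x = ∫ y, u y * φ (x - y)) →
        MemLp u p volume →
        eLpNorm u q volume ≤ C * eLpNorm u p volume := by
  rcases eq_or_ne p ∞ with hptop | hptop
  · refine ⟨1, one_pos, one_lt_top, fun u _ _ _ _ => ?_⟩
    have hq : q = ∞ := top_le_iff.mp (hptop ▸ hpq)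
    rw [hq, hptop, one_mul]
  · have hp0 : p ≠ 0 := hp.ne'
    have hpr0 : 0 < p.toReal := ENNReal.toReal_pos hp0 hptop
    rcases le_or_gt p.toReal 1 with hreg | hreg
    · -- small p regime
      set S : ℝ := max (2 ^ 1 * (Finset.Iic ((1:ℕ), (0:ℕ))).sup
        (fun m => SchwartzMap.seminorm ℝ m.1 m.2) φ) 1 with hSdef
      have hS1 : (1:ℝ) ≤ S := le_max_right _ _
      have hS : ∀ z, (1 + ‖z‖) * ‖φ z‖ ≤ S := by
        intro z
        refine le_trans ?_ (le_max_left _ _)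
        have h := SchwartzMap.one_add_le_sup_seminorm_apply (𝕜 := ℝ) (m := ((1:ℕ), (0:ℕ)))
          le_rfl le_rfl φ z
        simpa [norm_iteratedFDeriv_zero] using h
      set C₀ : ℝ := S ^ (1 / p.toReal) with hC₀def
      have hC₀1 : (1:ℝ) ≤ C₀ := Real.one_le_rpow hS1 (by positivity)
      refine ⟨ENNReal.ofReal C₀, by rw [ENNReal.ofReal_pos]; linarith,
        ENNReal.ofReal_lt_top, ?_⟩
      intro u hcont hgrow hrep hmem
      rcases eq_or_ne (eLpNorm u p volume) 0 with hN0 | hN0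
      · have hu0 : u = 0 :=
          (hcont.ae_eq_iff_eq volume continuous_const).mp
            ((eLpNorm_eq_zero_iff hmem.1 hp0).mp hN0)
        simp [hu0]
      · have hNtop := hmem.2.ne
        have hint := hmem.integrable_norm_rpow hp0 hptop
        have hNrel := nik_norm_int hmem hp0 hptop
        have hNppos : (0:ℝ) < (eLpNorm u p volume).toReal := ENNReal.toReal_pos hN0 hNtop
        have hNpos : 0 < ∫ y, ‖u y‖ ^ p.toReal := by rw [hNrel]; positivity
        have hbd : ∀ x, ‖u x‖ ≤ C₀ * (eLpNorm u p volume).toReal := by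
          intro x
          calc ‖u x‖ ≤ (S * ∫ y, ‖u y‖ ^ p.toReal) ^ (1 / p.toReal) :=
              nik_small φ u hgrow hrep hpr0 hreg hint hNpos hS1 hS x
            _ = C₀ * (eLpNorm u p volume).toReal := by
                rw [hNrel, Real.mul_rpow (by linarith) (Real.rpow_nonneg hNppos.le _),
                  ← Real.rpow_mul hNppos.le, mul_one_div_cancel hpr0.ne', Real.rpow_one]
        exact nik_assemble hmem.1 hp0 hptop hpq hN0 hNtop hC₀1 hbd
    · -- big p regime
      have hSφexists : ∃ Sφ : ℝ, ∀ z, ‖φ z‖ ≤ Sφ := by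
        refine ⟨2 ^ 0 * (Finset.Iic ((0:ℕ), (0:ℕ))).sup
          (fun m => SchwartzMap.seminorm ℝ m.1 m.2) φ, fun z => ?_⟩
        have h := SchwartzMap.one_add_le_sup_seminorm_apply (𝕜 := ℝ) (m := ((0:ℕ), (0:ℕ)))
          le_rfl le_rfl φ z
        simpa [norm_iteratedFDeriv_zero] using h
      obtain ⟨Sφ, hSφ⟩ := hSφexists
      set C₀ : ℝ := max ((∫ z, ‖φ z‖) + Sφ) 1 with hC₀def
      have hC₀1 : (1:ℝ) ≤ C₀ := le_max_right _ _
      refine ⟨ENNReal.ofReal C₀, by rw [ENNReal.ofReal_pos]; linarith,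
        ENNReal.ofReal_lt_top, ?_⟩
      intro u hcont hgrow hrep hmem
      rcases eq_or_ne (eLpNorm u p volume) 0 with hN0 | hN0
      · have hu0 : u = 0 :=
          (hcont.ae_eq_iff_eq volume continuous_const).mp
            ((eLpNorm_eq_zero_iff hmem.1 hp0).mp hN0)
        simp [hu0]
      · have hNtop := hmem.2.ne
        have hint := hmem.integrable_norm_rpow hp0 hptop
        have hNrel := nik_norm_int hmem hp0 hptop
        have hcpos : (0:ℝ) < (eLpNorm u p volume).toReal := ENNReal.toReal_pos hN0 hNtop
        set c : ℝ := (eLpNorm u p volume).toReal with hcdef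
        set v : EuclideanSpace ℝ (Fin n) → ℂ := fun y => ((c⁻¹ : ℝ) : ℂ) * u y with hvdef
        have hvnorm : ∀ y, ‖v y‖ = c⁻¹ * ‖u y‖ := by
          intro y
          simp only [hvdef]
          rw [norm_mul, Complex.norm_real, Real.norm_eq_abs, abs_of_pos (inv_pos.mpr hcpos)]
        have hvrep : ∀ x, v x = ∫ y, v y * φ (x - y) := by
          intro x
          simp only [hvdef]
          rw [hrep x, ← integral_const_mul]
          congr 1
          funext y
          ring
        have heqv : (fun y => ‖v y‖ ^ p.toReal)
            = fun y => (c⁻¹) ^ p.toReal * ‖u y‖ ^ p.toReal := by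
          funext y
          rw [hvnorm y, Real.mul_rpow (by positivity) (norm_nonneg _)]
        have hvint : Integrable (fun y => ‖v y‖ ^ p.toReal) volume := by
          rw [heqv]; exact hint.const_mul _
        have hvN : ∫ y, ‖v y‖ ^ p.toReal = 1 := by
          rw [heqv, integral_const_mul, hNrel, Real.inv_rpow hcpos.le,
            inv_mul_cancel₀ (ne_of_gt (Real.rpow_pos_of_pos hcpos _))]
        have hbd : ∀ x, ‖u x‖ ≤ C₀ * c := by
          intro x
          have h := nik_big φ v hvrep hreg.le hvint hvN hSφ x
          have h2 : c⁻¹ * ‖u x‖ ≤ (∫ z, ‖φ z‖) + Sφ := by rw [← hvnorm x]; exact h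
          have h3 : ‖u x‖ ≤ ((∫ z, ‖φ z‖) + Sφ) * c := by
            calc ‖u x‖ = c * (c⁻¹ * ‖u x‖) := by field_simp
              _ ≤ c * ((∫ z, ‖φ z‖) + Sφ) := mul_le_mul_of_nonneg_left h2 hcpos.le
              _ = ((∫ z, ‖φ z‖) + Sφ) * c := mul_comm _ _
          exact le_trans h3 (mul_le_mul_of_nonneg_right (le_max_left _ _) hcpos.le)
        exact nik_assemble hmem.1 hp0 hptop hpq hN0 hNtop hC₀1 hbd
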